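/- Let G and H be graphs where G is nontrivial, non-complete and connected. Then κ(G ∘ H) = κ(G)·|V(H)|, where G ∘ H is the lexicographic product. -/

import Mathlib

open SimpleGraph

/-- An `S`-Steiner tree in `G`: a subgraph that is a tree and contains `S`. -/
def IsSteinerTree {V : Type*} (G : SimpleGraph V) (S : Set V) (T : G.Subgraph) : Prop :=
  T.coe.IsTree ∧ S ⊆ T.verts

/-- Two `S`-trees are internally disjoint: edge-disjoint and meeting exactly in `S`. -/
def IntDisjoint {V : Type*} (S : Set V) {G : SimpleGraph V} (T₁ T₂ : G.Subgraph) : Prop :=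
  T₁.verts ∩ T₂.verts = S ∧ ∀ u v, ¬ (T₁.Adj u v ∧ T₂.Adj u v)

/-- `κ(S)`: the maximum number of pairwise internally disjoint `S`-Steiner trees. -/
noncomputable def steinerConn {V : Type*} (G : SimpleGraph V) (S : Set V) : ℕ :=
  sSup {n | ∃ f : Fin n → G.Subgraph,
    (∀ i, IsSteinerTree G S (f i)) ∧ ∀ i j, i ≠ j → IntDisjoint S (f i) (f j)}

/-- The generalized `k`-connectivity `κ_k(G)`. -/
noncomputable def genConn {V : Type*} (G : SimpleGraph V) (k : ℕ) : ℕ :=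
  sInf {c | ∃ S : Set V, S.ncard = k ∧ steinerConn G S = c}

/-- `G` is `k`-connected: more than `k` vertices, and removing fewer than `k`
vertices leaves it connected. -/
def KConnected {V : Type*} (G : SimpleGraph V) (k : ℕ) : Prop :=
  k < Nat.card V ∧ ∀ s : Set V, s.Finite → s.ncard < k → (G.induce sᶜ).Connected

/-- The vertex connectivity `κ(G)`. -/
noncomputable def vconn {V : Type*} (G : SimpleGraph V) : ℕ :=
  sSup {k | KConnected G k}

/-- The lexicographic product `G ∘ H`. -/
def lexProd {V W : Type*} (G : SimpleGraph V) (H : SimpleGraph W) : SimpleGraph (V × W) where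
  Adj a b := G.Adj a.1 b.1 ∨ (a.1 = b.1 ∧ H.Adj a.2 b.2)
  symm := by
    constructor
    intro a b h
    rcases h with h | ⟨h1, h2⟩
    · exact Or.inl h.symm
    · exact Or.inr ⟨h1.symm, h2.symm⟩
  loopless := by
    constructor
    intro a h
    rcases h with h | ⟨_, h2⟩
    · exact G.loopless.irrefl _ h
    · exact H.loopless.irrefl _ h2

/-- The star `K_{1,m}` on `m + 1` vertices: center `none`, leaves `some i`. -/
def starGraph (m : ℕ) : SimpleGraph (Option (Fin m)) where
  Adj u v := u ≠ v ∧ (u = none ∨ v = none)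
  symm := by constructor; intro u v ⟨h1, h2⟩; exact ⟨h1.symm, h2.symm⟩
  loopless := by constructor; intro u ⟨h1, _⟩; exact h1 rfl


section Aux

variable {V : Type*} {W : Type*}

private lemma lexProd_adj (G : SimpleGraph V) (H : SimpleGraph W) {a b : V × W} :
    (lexProd G H).Adj a b ↔ G.Adj a.1 b.1 ∨ (a.1 = b.1 ∧ H.Adj a.2 b.2) := Iff.rfl

private lemma kconn_mono {G : SimpleGraph V} {j k : ℕ} (h : KConnected G k) (hj : j ≤ k) :
    KConnected G j :=
  ⟨lt_of_le_of_lt hj h.1, fun s hs hcard => h.2 s hs (lt_of_lt_of_le hcard hj)⟩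

private lemma kconn_bddAbove (G : SimpleGraph V) : BddAbove {k | KConnected G k} :=
  ⟨Nat.card V, fun _ hk => hk.1.le⟩

private lemma kconn_zero [Finite V] [Nonempty V] (G : SimpleGraph V) : KConnected G 0 :=
  ⟨Nat.card_pos, fun s _ h => by omega⟩

private lemma kconn_vconn [Finite V] [Nonempty V] (G : SimpleGraph V) :
    KConnected G (vconn G) := by
  have h0 : (0 : ℕ) ∈ {k | KConnected G k} := kconn_zero G
  have h := Nat.sSup_mem (s := {k | KConnected G k}) ⟨0, h0⟩ (kconn_bddAbove G)
  exact h

private lemma not_kconn_vconn_succ (G : SimpleGraph V) : ¬ KConnected G (vconn G + 1) := by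
  intro h
  have := le_csSup (kconn_bddAbove G) h
  have h2 : vconn G + 1 ≤ vconn G := this
  omega

private lemma no_adj_reachable_eq {V' : Type*} {G' : SimpleGraph V'}
    (hno : ∀ a b : V', ¬ G'.Adj a b) {x y : V'} (h : G'.Reachable x y) : x = y := by
  obtain ⟨p⟩ := h
  cases p with
  | nil => rfl
  | cons h _ => exact absurd h (hno _ _)

private lemma exists_adj_of_preconnected {V' : Type*} {G' : SimpleGraph V'}
    (hc : G'.Preconnected) {x y : V'} (hxy : x ≠ y) : ∃ z, G'.Adj x z := by
  obtain ⟨p⟩ := hc x y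
  cases p with
  | nil => exact absurd rfl hxy
  | cons h _ => exact ⟨_, h⟩

private lemma not_kconn_of_nonadj [Fintype V] {G : SimpleGraph V} {u v : V}
    (hne : u ≠ v) (hna : ¬ G.Adj u v) : ¬ KConnected G (Fintype.card V - 1) := by
  intro h
  have hcard2 : 2 ≤ Fintype.card V := Fintype.one_lt_card_iff.mpr ⟨u, v, hne⟩
  have hpair : ({u, v} : Set V).ncard = 2 := Set.ncard_pair hne
  have hcompl : ({u, v}ᶜ : Set V).ncard < Fintype.card V - 1 := by
    have hadd := Set.ncard_add_ncard_compl ({u, v} : Set V)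
    rw [Nat.card_eq_fintype_card] at hadd
    omega
  have hc := h.2 ({u, v}ᶜ) (Set.toFinite _) hcompl
  rw [compl_compl] at hc
  have hno : ∀ a b : ↥({u, v} : Set V), ¬ (G.induce {u, v}).Adj a b := by
    rintro ⟨a, ha⟩ ⟨b, hb⟩ hab
    have hadj : G.Adj a b := hab
    rcases ha with rfl | rfl <;> rcases hb with rfl | rfl
    · exact G.loopless.irrefl _ hadj
    · exact hna hadj
    · exact hna hadj.symm
    · exact G.loopless.irrefl _ hadj
  have hu : u ∈ ({u, v} : Set V) := Or.inl rfl
  have hv : v ∈ ({u, v} : Set V) := Or.inr rfl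
  have := no_adj_reachable_eq hno (hc.preconnected ⟨u, hu⟩ ⟨v, hv⟩)
  exact hne (congrArg Subtype.val this)

private lemma exists_nonadj [Fintype V] {G : SimpleGraph V} (hGc : G ≠ ⊤) :
    ∃ u v, u ≠ v ∧ ¬ G.Adj u v := by
  by_contra hc
  push_neg at hc
  apply hGc
  ext a b
  simp only [SimpleGraph.top_adj]
  exact ⟨fun h => G.ne_of_adj h, fun h => hc a b h⟩

private lemma vconn_add_two_le [Fintype V] {G : SimpleGraph V}
    (hVn : 2 ≤ Fintype.card V) (hGc : G ≠ ⊤) : vconn G + 2 ≤ Fintype.card V := by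
  obtain ⟨u, v, hne, hna⟩ := exists_nonadj hGc
  have hbound : ∀ m ∈ {k | KConnected G k}, m ≤ Fintype.card V - 2 := by
    intro m hm
    by_contra h
    push_neg at h
    exact not_kconn_of_nonadj hne hna (kconn_mono hm (by omega))
  have : Nonempty V := Fintype.card_pos_iff.mp (by omega)
  have h1 : vconn G ≤ Fintype.card V - 2 := csSup_le ⟨0, kconn_zero G⟩ hbound
  omega

private lemma one_le_vconn [Fintype V] {G : SimpleGraph V}
    (hG : G.Connected) (hVn : 2 ≤ Fintype.card V) : 1 ≤ vconn G := by
  have : Nonempty V := Fintype.card_pos_iff.mp (by omega)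
  have h1 : KConnected G 1 := by
    refine ⟨by rw [Nat.card_eq_fintype_card]; omega, ?_⟩
    intro s hs hcard
    have hse : s = ∅ := by
      rw [← Set.ncard_eq_zero hs]
      omega
    subst hse
    rw [Set.compl_empty]
    exact ((induceUnivIso G).connected_iff).mpr hG
  exact le_csSup (kconn_bddAbove G) h1

private lemma ncard_prod_univ [Fintype W] (s : Set V) :
    (s ×ˢ (Set.univ : Set W)).ncard = s.ncard * Fintype.card W := by
  rw [← Nat.card_coe_set_eq, Nat.card_congr (Equiv.Set.prod s Set.univ), Nat.card_prod,
    Nat.card_coe_set_eq, Nat.card_coe_set_eq, Set.ncard_univ, Nat.card_eq_fintype_card]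

private lemma mem_proj {s : Set V} {x : V × W}
    (hx : x ∈ (s ×ˢ (Set.univ : Set W))ᶜ) : x.1 ∈ sᶜ :=
  fun h => hx ⟨h, Set.mem_univ _⟩

private lemma reach_proj (G : SimpleGraph V) (H : SimpleGraph W) (s : Set V) :
    ∀ {a b : ↥((s ×ˢ (Set.univ : Set W))ᶜ)}
      (_ : ((lexProd G H).induce ((s ×ˢ (Set.univ : Set W))ᶜ)).Walk a b),
      (G.induce sᶜ).Reachable ⟨a.1.1, mem_proj a.2⟩ ⟨b.1.1, mem_proj b.2⟩ := by
  intro a b p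
  induction p with
  | nil => exact SimpleGraph.Reachable.refl _
  | @cons x y z h q ih =>
    have h' : (lexProd G H).Adj x.1 y.1 := h
    rcases h' with h' | ⟨h1, _⟩
    · have hadj : (G.induce sᶜ).Adj ⟨x.1.1, mem_proj x.2⟩ ⟨y.1.1, mem_proj y.2⟩ := h'
      exact hadj.reachable.trans ih
    · have heq : (⟨x.1.1, mem_proj x.2⟩ : ↥sᶜ) = ⟨y.1.1, mem_proj y.2⟩ := Subtype.ext h1
      rw [heq]
      exact ih

private lemma kconn_prod [Fintype V] [Fintype W] [Nonempty W] (G : SimpleGraph V)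
    (H : SimpleGraph W) (hG : G.Connected) (hVn : 2 ≤ Fintype.card V) (hGc : G ≠ ⊤) :
    KConnected (lexProd G H) (vconn G * Fintype.card W) := by
  have hNV : Nonempty V := Fintype.card_pos_iff.mp (by omega)
  set n := Fintype.card W with hn
  set k := vconn G with hk
  have hn0 : 0 < n := Fintype.card_pos
  have hk2 : k + 2 ≤ Fintype.card V := vconn_add_two_le hVn hGc
  constructor
  · rw [Nat.card_eq_fintype_card, Fintype.card_prod]
    exact Nat.mul_lt_mul_of_lt_of_le (by omega) le_rfl hn0
  · intro T hTfin hT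
    set F : Set V := {u | ∀ w, (u, w) ∈ T} with hF
    have hsub : F ×ˢ (Set.univ : Set W) ⊆ T := by
      rintro ⟨u, w⟩ ⟨hu, -⟩
      exact hu w
    have hFcard : F.ncard < k := by
      have h1 : F.ncard * n ≤ T.ncard := by
        rw [← ncard_prod_univ]
        exact Set.ncard_le_ncard hsub hTfin
      by_contra h
      push_neg at h
      have := Nat.mul_le_mul_right n h
      omega
    have hGF : (G.induce Fᶜ).Connected := (kconn_vconn G).2 F (Set.toFinite F) hFcard
    have hcompl : 1 < Fᶜ.ncard := by
      have hadd := Set.ncard_add_ncard_compl F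
      rw [Nat.card_eq_fintype_card] at hadd
      omega
    have hrep : ∀ u, u ∉ F → ∃ w, (u, w) ∉ T := by
      intro u hu
      by_contra h
      push_neg at h
      exact hu h
    choose f hf using hrep
    have hnbr : ∀ u, ∀ hu : u ∈ Fᶜ, ∃ u', ∃ _ : u' ∈ Fᶜ, G.Adj u u' := by
      intro u hu
      obtain ⟨y, hy, hyne⟩ := Set.exists_ne_of_one_lt_ncard hcompl u
      obtain ⟨z, hz⟩ := exists_adj_of_preconnected hGF.preconnected
        (x := ⟨u, hu⟩) (y := ⟨y, hy⟩) (fun h => hyne (congrArg Subtype.val h).symm)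
      exact ⟨z.1, z.2, hz⟩
    have stepB : ∀ a b : ↥Fᶜ,
        ((lexProd G H).induce Tᶜ).Reachable ⟨(a.1, f a.1 a.2), hf a.1 a.2⟩
          ⟨(b.1, f b.1 b.2), hf b.1 b.2⟩ := by
      intro a b
      obtain ⟨p⟩ := hGF.preconnected a b
      induction p with
      | nil => exact SimpleGraph.Reachable.refl _
      | @cons x y z h q ih =>
        have hxy : G.Adj x.1 y.1 := h
        have hadj : ((lexProd G H).induce Tᶜ).Adj ⟨(x.1, f x.1 x.2), hf x.1 x.2⟩
            ⟨(y.1, f y.1 y.2), hf y.1 y.2⟩ := Or.inl hxy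
        exact hadj.reachable.trans ih
    have stepC : ∀ x : V × W, ∀ hx : x ∈ Tᶜ, ∃ hu : x.1 ∈ Fᶜ,
        ((lexProd G H).induce Tᶜ).Reachable ⟨x, hx⟩ ⟨(x.1, f x.1 hu), hf x.1 hu⟩ := by
      intro x hx
      have hu : x.1 ∉ F := fun h => hx (h x.2)
      refine ⟨hu, ?_⟩
      obtain ⟨u', hu', hadj⟩ := hnbr x.1 hu
      have h1 : ((lexProd G H).induce Tᶜ).Adj ⟨x, hx⟩ ⟨(u', f u' hu'), hf u' hu'⟩ :=
        Or.inl hadj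
      have h2 : ((lexProd G H).induce Tᶜ).Adj ⟨(u', f u' hu'), hf u' hu'⟩
          ⟨(x.1, f x.1 hu), hf x.1 hu⟩ := Or.inl hadj.symm
      exact h1.reachable.trans h2.reachable
    haveI : Nonempty ↥Tᶜ := by
      obtain ⟨u, hu⟩ := Set.nonempty_of_ncard_ne_zero (s := Fᶜ) (by omega)
      exact ⟨⟨(u, f u hu), hf u hu⟩⟩
    refine SimpleGraph.Connected.mk ?_
    intro a b
    obtain ⟨hua, ra⟩ := stepC a.1 a.2
    obtain ⟨hub, rb⟩ := stepC b.1 b.2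
    have h := (ra.trans (stepB ⟨a.1.1, hua⟩ ⟨b.1.1, hub⟩)).trans rb.symm
    simpa using h

end Aux

/-- Yang–Xu: `κ(G ∘ H) = κ(G)|V(H)|` for `G` nontrivial, non-complete and connected. -/
theorem vconn_lexProd {V W : Type*} [Fintype V] [Fintype W]
    (G : SimpleGraph V) (H : SimpleGraph W) (hG : G.Connected)
    (hVn : 2 ≤ Fintype.card V) (hGc : G ≠ ⊤) :
    vconn (lexProd G H) = vconn G * Fintype.card W := by
  have hNV : Nonempty V := Fintype.card_pos_iff.mp (by omega)
  rcases isEmpty_or_nonempty W with hW | hW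
  · have hcW : Fintype.card W = 0 := Fintype.card_eq_zero
    rw [hcW, Nat.mul_zero]
    have hempty : {m | KConnected (lexProd G H) m} = ∅ := by
      ext m
      simp only [Set.mem_setOf_eq, Set.mem_empty_iff_false, iff_false]
      intro h
      have h1 := h.1
      rw [Nat.card_eq_fintype_card, Fintype.card_prod, hcW] at h1
      omega
    show sSup _ = 0
    rw [hempty, csSup_empty]
    rfl
  · have hlow := kconn_prod G H hG hVn hGc
    have hk2 : vconn G + 2 ≤ Fintype.card V := vconn_add_two_le hVn hGc
    have hub : ∀ m ∈ {c | KConnected (lexProd G H) c}, m ≤ vconn G * Fintype.card W := by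
      intro m hm
      by_contra hgt
      push_neg at hgt
      have hm' : KConnected (lexProd G H) (vconn G * Fintype.card W + 1) :=
        kconn_mono hm (by omega)
      have hex : ∃ s : Set V, s.Finite ∧ s.ncard < vconn G + 1 ∧ ¬ (G.induce sᶜ).Connected := by
        by_contra hcon
        push_neg at hcon
        exact not_kconn_vconn_succ G
          ⟨by rw [Nat.card_eq_fintype_card]; omega, fun s hs hc => hcon s hs hc⟩
      obtain ⟨s, hsfin, hscard, hsdisc⟩ := hex
      have hTcard : (s ×ˢ (Set.univ : Set W)).ncard < vconn G * Fintype.card W + 1 := by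
        rw [ncard_prod_univ]
        have h1 : s.ncard * Fintype.card W ≤ vconn G * Fintype.card W :=
          Nat.mul_le_mul_right _ (by omega)
        omega
      have hTconn := hm'.2 (s ×ˢ (Set.univ : Set W)) (Set.toFinite _) hTcard
      apply hsdisc
      haveI : Nonempty ↥sᶜ := by
        have hadd := Set.ncard_add_ncard_compl s
        rw [Nat.card_eq_fintype_card] at hadd
        obtain ⟨x, hx⟩ := Set.nonempty_of_ncard_ne_zero (s := sᶜ) (by omega)
        exact ⟨⟨x, hx⟩⟩
      refine SimpleGraph.Connected.mk ?_
      intro a b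
      obtain ⟨w₀⟩ := hW
      have ha : ((a.1, w₀) : V × W) ∈ (s ×ˢ (Set.univ : Set W))ᶜ := fun h => a.2 h.1
      have hb : ((b.1, w₀) : V × W) ∈ (s ×ˢ (Set.univ : Set W))ᶜ := fun h => b.2 h.1
      obtain ⟨p⟩ := hTconn.preconnected ⟨(a.1, w₀), ha⟩ ⟨(b.1, w₀), hb⟩
      have hr := reach_proj G H s p
      have ea : (⟨a.1, mem_proj ha⟩ : ↥sᶜ) = a := Subtype.ext rfl
      have eb : (⟨b.1, mem_proj hb⟩ : ↥sᶜ) = b := Subtype.ext rfl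
      rwa [ea, eb] at hr
    exact le_antisymm (csSup_le ⟨_, hlow⟩ hub) (le_csSup (kconn_bddAbove _) hlow)
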